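/- Let A be an n×n complex matrix and let k be the maximal Jordan block size of A. Then there exists a constant γ*(A) > 0 such that for every ε > 0 there is a norm p = p_{A,ε} on ℂ^n with the following properties, where p^∼ denotes the operator norm on n×n matrices associated to p: (i) p(x) ≤ γ*(A)·max(1, 1/ε)^{k−1}·h(x) and h(x) ≤ γ*(A)·max(1, ε)^{k−1}·p(x) for all x ∈ ℂ^n; (ii) p^∼(B) ≤ γ*(A)²·max(ε, 1/ε)^{k−1}·h^∼(B) and h^∼(B) ≤ γ*(A)²·max(ε, 1/ε)^{k−1}·p^∼(B) for every n×n complex matrix B; (iii) ‖A‖_sp ≤ p^∼(A) ≤ ‖A‖_sp + sign(k−1)·ε; and (iv) if A is invertible and ‖A^{−1}‖_sp^{−1} > sign(k−1)·ε, then ‖A^{−1}‖_sp ≤ p^∼(A^{−1}) ≤ (‖A^{−1}‖_sp^{−1} − sign(k−1)·ε)^{−1}. -/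

import Mathlib

open Matrix

/-- `p` is a norm on `ℂ^n`. -/
def IsNormOn {n : ℕ} (p : (Fin n → ℂ) → ℝ) : Prop :=
  (∀ x, 0 ≤ p x) ∧ (∀ x, p x = 0 → x = 0) ∧
  (∀ (c : ℂ) (x), p (c • x) = ‖c‖ * p x) ∧
  (∀ x y, p (x + y) ≤ p x + p y)

/-- The operator norm on `n×n` complex matrices associated with a norm `p` on `ℂ^n`. -/
noncomputable def opNormWrt {n : ℕ} (p : (Fin n → ℂ) → ℝ)
    (B : Matrix (Fin n) (Fin n) ℂ) : ℝ :=
  sSup {c : ℝ | ∃ x : Fin n → ℂ, p x ≤ 1 ∧ c = p (B.mulVec x)}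

/-- The sup norm `h` on `ℂ^n`. -/
noncomputable def hNorm {n : ℕ} (x : Fin n → ℂ) : ℝ := ‖x‖

/-- The spectral radius: the maximum of the absolute values of the eigenvalues. -/
noncomputable def specRad {n : ℕ} (A : Matrix (Fin n) (Fin n) ℂ) : ℝ :=
  sSup {r : ℝ | ∃ μ : ℂ, A.charpoly.IsRoot μ ∧ r = ‖μ‖}

/-- `k` is the maximal Jordan block size of `A`: the least positive integer `k` with
`ker((A − λI)^k) = ker((A − λI)^{k+1})` for every eigenvalue `λ` of `A`. -/
def IsMaxJordanSize {n : ℕ} (A : Matrix (Fin n) (Fin n) ℂ) (k : ℕ) : Prop :=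
  IsLeast {j : ℕ | 0 < j ∧ ∀ μ : ℂ, A.charpoly.IsRoot μ →
    LinearMap.ker (Matrix.mulVecLin ((A - μ • 1) ^ j)) =
      LinearMap.ker (Matrix.mulVecLin ((A - μ • 1) ^ (j + 1)))} k

section Aux
variable {n : ℕ}

lemma isNormOn_hNorm : IsNormOn (hNorm (n := n)) :=
  ⟨fun x => norm_nonneg x, fun x hx => norm_eq_zero.mp hx,
   fun c x => by simp [hNorm, norm_smul], fun x y => norm_add_le x y⟩

lemma IsNormOn.zero {p : (Fin n → ℂ) → ℝ} (hp : IsNormOn p) : p 0 = 0 := by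
  have := hp.2.2.1 0 0
  simpa using this

lemma opNormWrt_nonneg {p : (Fin n → ℂ) → ℝ} (hp : IsNormOn p) (B : Matrix (Fin n) (Fin n) ℂ) :
    0 ≤ opNormWrt p B :=
  Real.sSup_nonneg (by rintro c ⟨x, -, rfl⟩; exact hp.1 _)

lemma opNormWrt_le {p : (Fin n → ℂ) → ℝ} (hp : IsNormOn p) {B : Matrix (Fin n) (Fin n) ℂ}
    {C : ℝ} (hC : 0 ≤ C) (h : ∀ x, p (B.mulVec x) ≤ C * p x) : opNormWrt p B ≤ C := by
  have hne : {c : ℝ | ∃ x : Fin n → ℂ, p x ≤ 1 ∧ c = p (B.mulVec x)}.Nonempty :=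
    ⟨p (B.mulVec 0), 0, by simp [hp.zero], rfl⟩
  apply csSup_le hne
  rintro c ⟨x, hx1, rfl⟩
  calc p (B.mulVec x) ≤ C * p x := h x
    _ ≤ C * 1 := by exact mul_le_mul_of_nonneg_left hx1 hC
    _ = C := mul_one C

lemma le_opNormWrt {p : (Fin n → ℂ) → ℝ} (hp : IsNormOn p) {B : Matrix (Fin n) (Fin n) ℂ}
    {C : ℝ} (h : ∀ x, p (B.mulVec x) ≤ C * p x) (x : Fin n → ℂ) :
    p (B.mulVec x) ≤ opNormWrt p B * p x := by
  have hbdd : BddAbove {c : ℝ | ∃ x : Fin n → ℂ, p x ≤ 1 ∧ c = p (B.mulVec x)} := by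
    refine ⟨max C 0, ?_⟩
    rintro c ⟨y, hy1, rfl⟩
    calc p (B.mulVec y) ≤ C * p y := h y
      _ ≤ max C 0 * p y := mul_le_mul_of_nonneg_right (le_max_left _ _) (hp.1 _)
      _ ≤ max C 0 * 1 := mul_le_mul_of_nonneg_left hy1 (le_max_right _ _)
      _ = max C 0 := mul_one _
  rcases eq_or_lt_of_le (hp.1 x) with h0 | h0
  · have hx0 : x = 0 := hp.2.1 x h0.symm
    simp [hx0, hp.zero]
  · set y : Fin n → ℂ := ((p x : ℂ))⁻¹ • x with hy
    have hpyx : ‖((p x : ℂ))⁻¹‖ = (p x)⁻¹ := by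
      rw [norm_inv, Complex.norm_real, Real.norm_of_nonneg h0.le]
    have hpy : p y = 1 := by
      rw [hy, hp.2.2.1, hpyx, inv_mul_cancel₀ (ne_of_gt h0)]
    have hmem : p (B.mulVec y) ∈ {c : ℝ | ∃ x : Fin n → ℂ, p x ≤ 1 ∧ c = p (B.mulVec x)} :=
      ⟨y, le_of_eq hpy, rfl⟩
    have h1 := le_csSup hbdd hmem
    have h2 : p (B.mulVec y) = (p x)⁻¹ * p (B.mulVec x) := by
      rw [hy, Matrix.mulVec_smul, hp.2.2.1, hpyx]
    rw [h2] at h1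
    calc p (B.mulVec x) = (p x) * ((p x)⁻¹ * p (B.mulVec x)) := by
          field_simp
      _ ≤ (p x) * opNormWrt p B := mul_le_mul_of_nonneg_left h1 (hp.1 x)
      _ = opNormWrt p B * p x := mul_comm _ _

lemma exists_bound (g : (Fin n → ℂ) →ₗ[ℂ] (Fin n → ℂ)) :
    ∃ C : ℝ, 0 ≤ C ∧ ∀ x, ‖g x‖ ≤ C * ‖x‖ := by
  refine ⟨‖LinearMap.toContinuousLinearMap g‖, norm_nonneg _, fun x => ?_⟩
  exact (LinearMap.toContinuousLinearMap g).le_opNorm x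

lemma opNormWrt_le_of_dominates {p q : (Fin n → ℂ) → ℝ} (hp : IsNormOn p) (hq : IsNormOn q)
    {a b : ℝ} (ha : 0 ≤ a) (hb : 0 ≤ b) (hpq : ∀ x, p x ≤ a * q x) (hqp : ∀ x, q x ≤ b * p x)
    {B : Matrix (Fin n) (Fin n) ℂ} {C : ℝ} (hCq : ∀ x, q (B.mulVec x) ≤ C * q x) :
    opNormWrt p B ≤ a * b * opNormWrt q B := by
  apply opNormWrt_le hp (by have := opNormWrt_nonneg hq B; positivity)
  intro x
  calc p (B.mulVec x) ≤ a * q (B.mulVec x) := hpq _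
    _ ≤ a * (opNormWrt q B * q x) := mul_le_mul_of_nonneg_left (le_opNormWrt hq hCq x) ha
    _ ≤ a * (opNormWrt q B * (b * p x)) := by
        refine mul_le_mul_of_nonneg_left (mul_le_mul_of_nonneg_left (hqp x) ?_) ha
        exact opNormWrt_nonneg hq B
    _ = a * b * opNormWrt q B * p x := by ring

end Aux

section Eigen
variable {n : ℕ}

lemma charpoly_eval (A : Matrix (Fin n) (Fin n) ℂ) (μ : ℂ) :
    A.charpoly.eval μ = (μ • (1 : Matrix (Fin n) (Fin n) ℂ) - A).det := by
  rw [Matrix.charpoly, ← Polynomial.coe_evalRingHom, RingHom.map_det]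
  congr 1
  ext i j
  by_cases h : i = j
  · subst h
    simp [Matrix.charmatrix_apply_eq, Matrix.one_apply]
  · simp [Matrix.charmatrix_apply_ne _ _ _ h, Matrix.one_apply_ne h]

lemma isRoot_charpoly_iff (A : Matrix (Fin n) (Fin n) ℂ) (μ : ℂ) :
    A.charpoly.IsRoot μ ↔ ∃ v, v ≠ 0 ∧ A.mulVec v = μ • v := by
  rw [Polynomial.IsRoot, charpoly_eval, ← Matrix.exists_mulVec_eq_zero_iff]
  constructor
  · rintro ⟨v, hv, hv0⟩
    refine ⟨v, hv, ?_⟩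
    rw [Matrix.sub_mulVec, Matrix.smul_mulVec, Matrix.one_mulVec, sub_eq_zero] at hv0
    exact hv0.symm
  · rintro ⟨v, hv, hv0⟩
    refine ⟨v, hv, ?_⟩
    rw [Matrix.sub_mulVec, Matrix.smul_mulVec, Matrix.one_mulVec, sub_eq_zero, hv0]

lemma mulVecLin_pow' (M : Matrix (Fin n) (Fin n) ℂ) (j : ℕ) :
    (M ^ j).mulVecLin = (M.mulVecLin) ^ j := by
  have h : ∀ N : Matrix (Fin n) (Fin n) ℂ, N.mulVecLin = Matrix.toLinAlgEquiv' N := by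
    intro N; exact LinearMap.ext fun v => rfl
  rw [h, h, map_pow]

lemma mulVecLin_sub_smul_one (A : Matrix (Fin n) (Fin n) ℂ) (μ : ℂ) :
    (A - μ • 1).mulVecLin = A.mulVecLin - μ • (1 : Module.End ℂ (Fin n → ℂ)) := by
  refine LinearMap.ext fun v => ?_
  show (A - μ • 1).mulVec v = A.mulVec v - μ • v
  rw [Matrix.sub_mulVec, Matrix.smul_mulVec, Matrix.one_mulVec]

lemma eq_zero_of_not_root {A : Matrix (Fin n) (Fin n) ℂ} {μ : ℂ}
    (hμ : ¬ A.charpoly.IsRoot μ) {m : ℕ} {x : Fin n → ℂ}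
    (hx : (((A.mulVecLin - μ • 1) ^ m)) x = 0) : x = 0 := by
  induction m generalizing x with
  | zero => simpa using hx
  | succ m ih =>
    rw [pow_succ, Module.End.mul_apply] at hx
    have h1 : (A.mulVecLin - μ • 1) x = 0 := ih hx
    by_contra hx0
    apply hμ
    rw [isRoot_charpoly_iff]
    refine ⟨x, hx0, ?_⟩
    have : A.mulVecLin x - μ • x = 0 := by simpa using h1
    show A.mulVecLin x = μ • x
    exact sub_eq_zero.mp this

lemma maxGen_eq_bot {A : Matrix (Fin n) (Fin n) ℂ} {μ : ℂ}
    (hμ : ¬ A.charpoly.IsRoot μ) : Module.End.maxGenEigenspace (A.mulVecLin) μ = ⊥ := by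
  rw [eq_bot_iff]
  intro x hx
  rw [Module.End.mem_maxGenEigenspace] at hx
  obtain ⟨m, hm⟩ := hx
  exact eq_zero_of_not_root hμ hm

lemma ker_pow_apply_eq_zero {g : Module.End ℂ (Fin n → ℂ)} {k : ℕ}
    (hstab : LinearMap.ker (g ^ k) = LinearMap.ker (g ^ (k + 1)))
    {x : Fin n → ℂ} (hx : ∃ m, (g ^ m) x = 0) : (g ^ k) x = 0 := by
  obtain ⟨m, hm⟩ := hx
  rcases le_or_gt m k with h | h
  · have : g ^ k = g ^ (k - m) * g ^ m := by
      rw [← pow_add, Nat.sub_add_cancel h]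
    rw [this, Module.End.mul_apply, hm, map_zero]
  · have h2 : LinearMap.ker (g ^ k) = LinearMap.ker (g ^ (k + (m - k))) :=
      Module.End.ker_pow_constant hstab (m - k)
    rw [Nat.add_sub_cancel' h.le] at h2
    have : x ∈ LinearMap.ker (g ^ m) := hm
    rw [← h2] at this
    exact this

end Eigen

section Proj
variable {n : ℕ}

noncomputable def rootSet (A : Matrix (Fin n) (Fin n) ℂ) : Finset ℂ := by
  classical exact A.charpoly.roots.toFinset

lemma mem_rootSet_iff {A : Matrix (Fin n) (Fin n) ℂ} {μ : ℂ} :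
    μ ∈ rootSet A ↔ A.charpoly.IsRoot μ := by
  classical
  rw [rootSet]
  rw [Multiset.mem_toFinset, Polynomial.mem_roots (A.charpoly_monic.ne_zero)]

noncomputable def Wsub (A : Matrix (Fin n) (Fin n) ℂ) (μ : rootSet A) :
    Submodule ℂ (Fin n → ℂ) :=
  Module.End.maxGenEigenspace (A.mulVecLin) μ.1

lemma isInternal_Wsub (A : Matrix (Fin n) (Fin n) ℂ) : DirectSum.IsInternal (Wsub A) := by
  apply DirectSum.isInternal_submodule_of_iSupIndep_of_iSup_eq_top
  · exact (Module.End.independent_maxGenEigenspace A.mulVecLin).comp Subtype.val_injective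
  · have htop := Module.End.iSup_maxGenEigenspace_eq_top A.mulVecLin
    rw [eq_top_iff, ← htop]
    apply iSup_le
    intro μ
    by_cases hμ : μ ∈ rootSet A
    · exact le_iSup (fun ν : rootSet A => Wsub A ν) ⟨μ, hμ⟩
    · rw [maxGen_eq_bot (fun h => hμ (mem_rootSet_iff.mpr h))]
      exact bot_le

noncomputable def projW (A : Matrix (Fin n) (Fin n) ℂ) (μ : rootSet A) :
    (Fin n → ℂ) →ₗ[ℂ] (Fin n → ℂ) := by
  classical exact
  (Wsub A μ).subtype ∘ₗ (DirectSum.component ℂ (rootSet A) (fun ν => Wsub A ν) μ) ∘ₗ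
    (LinearEquiv.ofBijective (DirectSum.coeLinearMap (Wsub A)) (isInternal_Wsub A)).symm.toLinearMap

lemma projW_mem (A : Matrix (Fin n) (Fin n) ℂ) (μ : rootSet A) (x : Fin n → ℂ) :
    projW A μ x ∈ Wsub A μ := by
  classical
  simp only [projW, LinearMap.comp_apply]
  exact Submodule.coe_mem _

lemma projW_of_mem (A : Matrix (Fin n) (Fin n) ℂ) (μ : rootSet A) {x : Fin n → ℂ}
    (hx : x ∈ Wsub A μ) : projW A μ x = x := by
  classical
  simp only [projW, LinearMap.comp_apply, LinearEquiv.coe_coe]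
  have := (isInternal_Wsub A).ofBijective_coeLinearMap_of_mem (i := μ) hx
  erw [this]
  rfl

lemma projW_of_mem_ne (A : Matrix (Fin n) (Fin n) ℂ) {μ ν : rootSet A} (hne : ν ≠ μ)
    {x : Fin n → ℂ} (hx : x ∈ Wsub A ν) : projW A μ x = 0 := by
  classical
  simp only [projW, LinearMap.comp_apply, LinearEquiv.coe_coe]
  have := (isInternal_Wsub A).ofBijective_coeLinearMap_of_mem_ne (i := ν) (j := μ) hne hx
  erw [this]
  simp

lemma sum_projW (A : Matrix (Fin n) (Fin n) ℂ) (x : Fin n → ℂ) :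
    ∑ μ : rootSet A, projW A μ x = x := by
  classical
  set E := LinearEquiv.ofBijective (DirectSum.coeLinearMap (Wsub A)) (isInternal_Wsub A)
  have hde : ∀ d : DirectSum (rootSet A) (fun ν => Wsub A ν),
      DirectSum.coeLinearMap (Wsub A) d = ∑ μ : rootSet A, (d μ : Fin n → ℂ) := by
    intro d
    conv_lhs => rw [← DirectSum.sum_univ_of d]
    rw [map_sum]
    refine Finset.sum_congr rfl fun μ _ => ?_
    rw [DirectSum.coeLinearMap_of]
  have h1 : E (E.symm x) = x := E.apply_symm_apply x
  have h2 : E (E.symm x) = ∑ μ : rootSet A, ((E.symm x) μ : Fin n → ℂ) := hde _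
  rw [h1] at h2
  conv_rhs => rw [← h2.symm]
  rfl

lemma projW_comm (A : Matrix (Fin n) (Fin n) ℂ) (μ : rootSet A) (x : Fin n → ℂ) :
    projW A μ (A.mulVecLin x) = A.mulVecLin (projW A μ x) := by
  classical
  have hmaps : ∀ ν : rootSet A, ∀ y ∈ Wsub A ν, A.mulVecLin y ∈ Wsub A ν := by
    intro ν y hy
    exact Module.End.mapsTo_maxGenEigenspace_of_comm (Commute.refl A.mulVecLin) ν.1 hy
  conv_lhs => rw [← sum_projW A x, map_sum, map_sum]
  rw [Finset.sum_eq_single μ]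
  · exact (projW_of_mem A μ (hmaps μ _ (projW_mem A μ x))).symm ▸ rfl
  · intro ν _ hν
    exact projW_of_mem_ne A hν (hmaps ν _ (projW_mem A ν x))
  · intro h; exact absurd (Finset.mem_univ μ) h

end Proj

section Spec
variable {n : ℕ}

lemma Wsub_pow_eq_zero {A : Matrix (Fin n) (Fin n) ℂ} {k : ℕ} (hk : IsMaxJordanSize A k)
    (μ : rootSet A) {x : Fin n → ℂ} (hx : x ∈ Wsub A μ) :
    ((A.mulVecLin - μ.1 • 1) ^ k) x = 0 := by
  have hroot : A.charpoly.IsRoot μ.1 := mem_rootSet_iff.mp μ.2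
  have hker := hk.1.2 μ.1 hroot
  rw [mulVecLin_pow', mulVecLin_pow', mulVecLin_sub_smul_one] at hker
  rw [Wsub, Module.End.mem_maxGenEigenspace] at hx
  exact ker_pow_apply_eq_zero hker hx

lemma specRad_isGreatest (A : Matrix (Fin n) (Fin n) ℂ) (hne : (rootSet A).Nonempty) :
    IsGreatest {r : ℝ | ∃ μ : ℂ, A.charpoly.IsRoot μ ∧ r = ‖μ‖}
      (((rootSet A).image (fun z : ℂ => ‖z‖)).max' (hne.image _)) := by
  constructor
  · have := ((rootSet A).image (fun z : ℂ => ‖z‖)).max'_mem (hne.image _)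
    rw [Finset.mem_image] at this
    obtain ⟨μ, hμ, hμ2⟩ := this
    exact ⟨μ, mem_rootSet_iff.mp hμ, hμ2.symm⟩
  · rintro r ⟨μ, hμ, rfl⟩
    exact Finset.le_max' _ _ (Finset.mem_image_of_mem _ (mem_rootSet_iff.mpr hμ))

lemma specRad_eq_max' (A : Matrix (Fin n) (Fin n) ℂ) (hne : (rootSet A).Nonempty) :
    specRad A = ((rootSet A).image (fun z : ℂ => ‖z‖)).max' (hne.image _) :=
  (specRad_isGreatest A hne).csSup_eq

lemma specRad_le_opNormWrt {A : Matrix (Fin n) (Fin n) ℂ} (hne : (rootSet A).Nonempty)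
    {p : (Fin n → ℂ) → ℝ} (hp : IsNormOn p) {C : ℝ}
    (hbd : ∀ x, p (A.mulVec x) ≤ C * p x) :
    specRad A ≤ opNormWrt p A := by
  apply csSup_le
  · obtain ⟨μ, hμ⟩ := hne
    exact ⟨‖μ‖, μ, mem_rootSet_iff.mp hμ, rfl⟩
  · rintro r ⟨μ, hμ, rfl⟩
    obtain ⟨v, hv0, hv⟩ := (isRoot_charpoly_iff A μ).mp hμ
    have hpv : 0 < p v := by
      rcases eq_or_lt_of_le (hp.1 v) with h | h
      · exact absurd (hp.2.1 v h.symm) hv0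
      · exact h
    have h1 : p (A.mulVec v) = ‖μ‖ * p v := by rw [hv, hp.2.2.1]
    have h2 := le_opNormWrt hp hbd v
    rw [h1] at h2
    exact le_of_mul_le_mul_right h2 hpv

lemma root_ne_zero {A : Matrix (Fin n) (Fin n) ℂ} (hdet : IsUnit A.det) {μ : ℂ}
    (hμ : A.charpoly.IsRoot μ) : μ ≠ 0 := by
  obtain ⟨v, hv0, hv⟩ := (isRoot_charpoly_iff A μ).mp hμ
  rintro rfl
  apply hv0
  have : A⁻¹.mulVec (A.mulVec v) = A⁻¹.mulVec (0 : Fin n → ℂ) := by rw [hv]; simp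
  rwa [Matrix.mulVec_mulVec, Matrix.nonsing_inv_mul A hdet, Matrix.one_mulVec,
    Matrix.mulVec_zero] at this

lemma eig_inv {A : Matrix (Fin n) (Fin n) ℂ} (hdet : IsUnit A.det) {ν : ℂ}
    {v : Fin n → ℂ} (hv0 : v ≠ 0) (hv : A.mulVec v = ν • v) :
    ν ≠ 0 ∧ A⁻¹.mulVec v = ν⁻¹ • v := by
  have hAv : A⁻¹.mulVec (A.mulVec v) = v := by
    rw [Matrix.mulVec_mulVec, Matrix.nonsing_inv_mul A hdet, Matrix.one_mulVec]
  have hν : ν ≠ 0 := by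
    rintro rfl
    rw [zero_smul] at hv
    rw [hv, Matrix.mulVec_zero] at hAv
    exact hv0 hAv.symm
  refine ⟨hν, ?_⟩
  have := congrArg (fun w => ν⁻¹ • w) hAv
  rw [hv, Matrix.mulVec_smul] at this
  rwa [smul_smul, inv_mul_cancel₀ hν, one_smul] at this

lemma isRoot_inv_iff {A : Matrix (Fin n) (Fin n) ℂ} (hdet : IsUnit A.det) {μ : ℂ} :
    A⁻¹.charpoly.IsRoot μ ↔ ∃ ν : ℂ, A.charpoly.IsRoot ν ∧ μ = ν⁻¹ := by
  have hdet' : IsUnit A⁻¹.det := A.isUnit_nonsing_inv_det hdet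
  constructor
  · intro hμ
    obtain ⟨v, hv0, hv⟩ := (isRoot_charpoly_iff A⁻¹ μ).mp hμ
    obtain ⟨hμ0, hinv⟩ := eig_inv hdet' hv0 hv
    rw [Matrix.nonsing_inv_nonsing_inv A hdet] at hinv
    refine ⟨μ⁻¹, (isRoot_charpoly_iff A μ⁻¹).mpr ⟨v, hv0, hinv⟩, (inv_inv μ).symm⟩
  · rintro ⟨ν, hν, rfl⟩
    obtain ⟨v, hv0, hv⟩ := (isRoot_charpoly_iff A ν).mp hν
    obtain ⟨hν0, hinv⟩ := eig_inv hdet hv0 hv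
    exact (isRoot_charpoly_iff A⁻¹ ν⁻¹).mpr ⟨v, hv0, hinv⟩

lemma min'_pos {A : Matrix (Fin n) (Fin n) ℂ} (hdet : IsUnit A.det)
    (hne : (rootSet A).Nonempty) :
    0 < ((rootSet A).image (fun z : ℂ => ‖z‖)).min' (hne.image _) := by
  have hmem := ((rootSet A).image (fun z : ℂ => ‖z‖)).min'_mem (hne.image _)
  rw [Finset.mem_image] at hmem
  obtain ⟨ν, hν, hν2⟩ := hmem
  rw [← hν2]
  exact norm_pos_iff.mpr (root_ne_zero hdet (mem_rootSet_iff.mp hν))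

lemma specRad_inv_eq {A : Matrix (Fin n) (Fin n) ℂ} (hdet : IsUnit A.det)
    (hne : (rootSet A).Nonempty) :
    specRad A⁻¹ = (((rootSet A).image (fun z : ℂ => ‖z‖)).min' (hne.image _))⁻¹ := by
  set m0 := ((rootSet A).image (fun z : ℂ => ‖z‖)).min' (hne.image _) with hm0
  have hm0pos : 0 < m0 := min'_pos hdet hne
  have hgr : IsGreatest {r : ℝ | ∃ μ : ℂ, A⁻¹.charpoly.IsRoot μ ∧ r = ‖μ‖} m0⁻¹ := by
    constructor
    · have hmem := ((rootSet A).image (fun z : ℂ => ‖z‖)).min'_mem (hne.image _)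
      rw [Finset.mem_image] at hmem
      obtain ⟨ν, hν, hν2⟩ := hmem
      refine ⟨ν⁻¹, (isRoot_inv_iff hdet).mpr ⟨ν, mem_rootSet_iff.mp hν, rfl⟩, ?_⟩
      rw [norm_inv, hν2]
    · rintro r ⟨μ, hμ, rfl⟩
      obtain ⟨ν, hν, rfl⟩ := (isRoot_inv_iff hdet).mp hμ
      rw [norm_inv]
      apply inv_anti₀ hm0pos
      exact Finset.min'_le _ _ (Finset.mem_image_of_mem _ (mem_rootSet_iff.mpr hν))
  exact hgr.csSup_eq

lemma sum_shift_le {v : ℕ → ℝ} (hv : ∀ i, 0 ≤ v i) (m : ℕ) :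
    ∑ j ∈ Finset.range m, v (j+1) ≤ ∑ i ∈ Finset.range (m+1), v i := by
  rw [Finset.sum_range_succ' v m]
  have := hv 0
  linarith

end Spec

set_option maxHeartbeats 1000000 in
/-- Gutnik, Lemma 2. -/
theorem exists_adapted_norm
    (n k : ℕ) (A : Matrix (Fin n) (Fin n) ℂ) (hk : IsMaxJordanSize A k) :
    ∃ γ : ℝ, 0 < γ ∧ ∀ ε : ℝ, 0 < ε → ∃ p : (Fin n → ℂ) → ℝ, IsNormOn p ∧
      (∀ x, p x ≤ γ * (max 1 (1 / ε)) ^ (k - 1) * hNorm x) ∧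
      (∀ x, hNorm x ≤ γ * (max 1 ε) ^ (k - 1) * p x) ∧
      (∀ B : Matrix (Fin n) (Fin n) ℂ,
        opNormWrt p B ≤ γ ^ 2 * (max ε (1 / ε)) ^ (k - 1) * opNormWrt hNorm B) ∧
      (∀ B : Matrix (Fin n) (Fin n) ℂ,
        opNormWrt hNorm B ≤ γ ^ 2 * (max ε (1 / ε)) ^ (k - 1) * opNormWrt p B) ∧
      specRad A ≤ opNormWrt p A ∧
      opNormWrt p A ≤ specRad A + (if k = 1 then 0 else 1) * ε ∧
      (IsUnit A.det → (specRad A⁻¹)⁻¹ > (if k = 1 then 0 else 1) * ε →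
        specRad A⁻¹ ≤ opNormWrt p A⁻¹ ∧
        opNormWrt p A⁻¹ ≤ ((specRad A⁻¹)⁻¹ - (if k = 1 then 0 else 1) * ε)⁻¹) := by
  have hk1 : 0 < k := hk.1.1
  by_cases hn : IsEmpty (Fin n)
  · -- trivial case n = 0
    have hx0 : ∀ x : Fin n → ℂ, x = 0 := fun x => funext fun i => (hn.false i).elim
    have hspec : ∀ M : Matrix (Fin n) (Fin n) ℂ, specRad M = 0 := by
      intro M
      have hcp : M.charpoly = 1 := by
        rw [Matrix.charpoly, Matrix.det_isEmpty]
      have : {r : ℝ | ∃ μ : ℂ, M.charpoly.IsRoot μ ∧ r = ‖μ‖} = ∅ := by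
        ext r
        simp [hcp, Polynomial.IsRoot]
      rw [specRad, this, Real.sSup_empty]
    have hop : ∀ (p : (Fin n → ℂ) → ℝ), IsNormOn p → ∀ B : Matrix (Fin n) (Fin n) ℂ,
        opNormWrt p B = 0 := by
      intro p hp B
      refine le_antisymm (opNormWrt_le hp le_rfl fun x => ?_) (opNormWrt_nonneg hp B)
      rw [hx0 (B.mulVec x), hp.zero, zero_mul]
    have hε'0 : ∀ ε : ℝ, 0 < ε → (0:ℝ) ≤ (if k = 1 then 0 else 1) * ε := by
      intro ε hε
      split <;> simp [hε.le]
    refine ⟨1, one_pos, fun ε hε => ⟨hNorm, isNormOn_hNorm, fun x => ?_, fun x => ?_,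
      fun B => ?_, fun B => ?_, ?_, ?_, fun hdet hgt => ?_⟩⟩
    · rw [hx0 x]
      simp [hNorm]
    · rw [hx0 x]
      simp [hNorm]
    · rw [hop _ isNormOn_hNorm]
      simp
    · rw [hop _ isNormOn_hNorm]
      simp
    · rw [hop _ isNormOn_hNorm, hspec]
    · rw [hop _ isNormOn_hNorm, hspec]
      have := hε'0 ε hε
      linarith
    · exfalso
      rw [hspec, _root_.inv_zero] at hgt
      exact absurd hgt (not_lt.mpr (hε'0 ε hε))
  · -- main case : n ≥ 1
    rw [not_isEmpty_iff] at hn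
    -- the characteristic polynomial has a root
    have hne : (rootSet A).Nonempty := by
      have hnpos : 0 < n := Fin.pos_iff_nonempty.mpr hn
      have hdeg : 0 < A.charpoly.degree := by
        rw [A.charpoly_degree_eq_dim]
        simp [Fintype.card_fin]
        exact_mod_cast hnpos
      obtain ⟨μ, hμ⟩ := Complex.exists_root hdeg
      exact ⟨μ, mem_rootSet_iff.mpr hμ⟩
    set f := A.mulVecLin with hf
    -- operator-norm constants for the building blocks of the norm
    have hCex : ∀ (μ : rootSet A) (j : ℕ), ∃ C : ℝ, 0 ≤ C ∧
        ∀ x, ‖((f - μ.1 • 1) ^ j) (projW A μ x)‖ ≤ C * ‖x‖ := by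
      intro μ j
      obtain ⟨C, hC0, hC⟩ := exists_bound (((f - μ.1 • 1) ^ j) ∘ₗ projW A μ)
      exact ⟨C, hC0, fun x => by simpa using hC x⟩
    choose C hC0 hCle using hCex
    set Γ : ℝ := ∑ μ : rootSet A, ∑ j ∈ Finset.range k, C μ j with hΓ
    have hΓ0 : 0 ≤ Γ :=
      Finset.sum_nonneg fun μ _ => Finset.sum_nonneg fun j _ => hC0 μ j
    refine ⟨Γ + 1, by linarith, fun ε hε => ?_⟩
    set γ : ℝ := Γ + 1 with hγ
    have hγ1 : (1:ℝ) ≤ γ := by simp [hγ]; linarith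
    have hγ0 : (0:ℝ) ≤ γ := by linarith
    set ε' : ℝ := (if k = 1 then 0 else 1) * ε with hε'
    have hε'0 : 0 ≤ ε' := by
      rw [hε']; split <;> simp [hε.le]
    have hε'le : ε' ≤ ε := by
      rw [hε']; split <;> simp [hε.le]
    have hεinv0 : (0:ℝ) ≤ ε⁻¹ := inv_nonneg.mpr hε.le
    -- the adapted norm
    set q : ℂ → (Fin n → ℂ) → ℝ :=
      fun μ z => ∑ j ∈ Finset.range k, ε⁻¹ ^ j * ‖((f - μ • 1) ^ j) z‖ with hq
    set p : (Fin n → ℂ) → ℝ := fun x => ∑ μ : rootSet A, q μ.1 (projW A μ x) with hp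
    -- basic properties of q
    have hqnn : ∀ μ z, 0 ≤ q μ z := fun μ z =>
      Finset.sum_nonneg fun j _ => mul_nonneg (pow_nonneg hεinv0 j) (norm_nonneg _)
    have hqzero : ∀ μ, q μ 0 = 0 := by intro μ; simp [hq]
    have hqsmul : ∀ μ (c : ℂ) z, q μ (c • z) = ‖c‖ * q μ z := by
      intro μ c z
      rw [hq]
      simp only [_root_.map_smul, norm_smul, Finset.mul_sum]
      exact Finset.sum_congr rfl fun j _ => by ring
    have hqadd : ∀ μ y z, q μ (y + z) ≤ q μ y + q μ z := by
      intro μ y z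
      rw [hq]
      simp only
      rw [← Finset.sum_add_distrib]
      refine Finset.sum_le_sum fun j _ => ?_
      rw [← mul_add]
      refine mul_le_mul_of_nonneg_left ?_ (pow_nonneg hεinv0 j)
      rw [map_add]
      exact norm_add_le _ _
    have hqsub : ∀ μ y z, q μ (y - z) ≤ q μ y + q μ z := by
      intro μ y z
      have h1 : y - z = y + (-1 : ℂ) • z := by simp [sub_eq_add_neg]
      rw [h1]
      refine (hqadd μ y _).trans ?_
      rw [hqsmul]
      simp
    have hnormleq : ∀ μ z, ‖z‖ ≤ q μ z := by
      intro μ z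
      have h0 : (0:ℕ) ∈ Finset.range k := Finset.mem_range.mpr hk1
      have h := Finset.single_le_sum
        (f := fun j => ε⁻¹ ^ j * ‖((f - μ • 1) ^ j) z‖)
        (fun j _ => mul_nonneg (pow_nonneg hεinv0 j) (norm_nonneg _)) h0
      rw [hq]
      simp only
      refine le_trans ?_ h
      simp
    -- p is a norm
    have hpnn : ∀ x, 0 ≤ p x := fun x => Finset.sum_nonneg fun μ _ => hqnn _ _
    have hpdef : ∀ x, p x = 0 → x = 0 := by
      intro x hx
      have hall : ∀ μ : rootSet A, q μ.1 (projW A μ x) = 0 := by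
        intro μ
        have := (Finset.sum_eq_zero_iff_of_nonneg fun μ _ => hqnn _ _).mp hx
        exact this μ (Finset.mem_univ μ)
      have hproj0 : ∀ μ : rootSet A, projW A μ x = 0 := by
        intro μ
        have h1 := hnormleq μ.1 (projW A μ x)
        rw [hall μ] at h1
        exact norm_le_zero_iff.mp h1
      rw [← sum_projW A x]
      exact Finset.sum_eq_zero fun μ _ => hproj0 μ
    have hpsmul : ∀ (c : ℂ) x, p (c • x) = ‖c‖ * p x := by
      intro c x
      rw [hp]
      simp only [_root_.map_smul, Finset.mul_sum]
      exact Finset.sum_congr rfl fun μ _ => hqsmul _ _ _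
    have hpadd : ∀ x y, p (x + y) ≤ p x + p y := by
      intro x y
      rw [hp]
      simp only [map_add]
      rw [← Finset.sum_add_distrib]
      exact Finset.sum_le_sum fun μ _ => hqadd _ _ _
    have hpnorm : IsNormOn p := ⟨hpnn, hpdef, hpsmul, hpadd⟩
    -- comparison with the sup norm
    have hhlep : ∀ x, hNorm x ≤ p x := by
      intro x
      calc hNorm x = ‖∑ μ : rootSet A, projW A μ x‖ := by rw [sum_projW]; rfl
        _ ≤ ∑ μ : rootSet A, ‖projW A μ x‖ := norm_sum_le _ _
        _ ≤ ∑ μ : rootSet A, q μ.1 (projW A μ x) :=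
            Finset.sum_le_sum fun μ _ => hnormleq _ _
    have hmax1 : (1:ℝ) ≤ max 1 (1/ε) := le_max_left _ _
    have hmax1' : (1:ℝ) ≤ max 1 ε := le_max_left _ _
    have hmaxpow0 : (0:ℝ) ≤ (max 1 (1/ε)) ^ (k-1) := by positivity
    have hmaxpow1 : (1:ℝ) ≤ (max 1 (1/ε)) ^ (k-1) := one_le_pow₀ hmax1
    have hmaxpow1' : (1:ℝ) ≤ (max 1 ε) ^ (k-1) := one_le_pow₀ hmax1'
    have hεpow : ∀ j ∈ Finset.range k, ε⁻¹ ^ j ≤ (max 1 (1/ε)) ^ (k-1) := by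
      intro j hj
      have hj' : j ≤ k - 1 := Nat.le_pred_of_lt (Finset.mem_range.mp hj)
      calc ε⁻¹ ^ j ≤ (max 1 (1/ε)) ^ j := by
            refine pow_le_pow_left₀ hεinv0 ?_ j
            rw [one_div]
            exact le_max_right _ _
        _ ≤ (max 1 (1/ε)) ^ (k-1) := pow_le_pow_right₀ hmax1 hj'
    have hple : ∀ x, p x ≤ Γ * (max 1 (1/ε)) ^ (k-1) * ‖x‖ := by
      intro x
      have hterm : ∀ (μ : rootSet A), q μ.1 (projW A μ x) ≤
          ∑ j ∈ Finset.range k, C μ j * ((max 1 (1/ε)) ^ (k-1) * ‖x‖) := by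
        intro μ
        rw [hq]
        refine Finset.sum_le_sum fun j hj => ?_
        calc ε⁻¹ ^ j * ‖((f - μ.1 • 1) ^ j) (projW A μ x)‖
            ≤ (max 1 (1/ε)) ^ (k-1) * (C μ j * ‖x‖) := by
              refine mul_le_mul (hεpow j hj) (hCle μ j x) (norm_nonneg _) hmaxpow0
          _ = C μ j * ((max 1 (1/ε)) ^ (k-1) * ‖x‖) := by ring
      calc p x ≤ ∑ μ : rootSet A, ∑ j ∈ Finset.range k,
            C μ j * ((max 1 (1/ε)) ^ (k-1) * ‖x‖) := Finset.sum_le_sum fun μ _ => hterm μ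
        _ = ∑ μ : { x // x ∈ rootSet A }, (∑ j ∈ Finset.range k, C μ j) *
              ((max 1 (1/ε)) ^ (k-1) * ‖x‖) :=
            Finset.sum_congr rfl fun μ _ => (Finset.sum_mul _ _ _).symm
        _ = Γ * ((max 1 (1/ε)) ^ (k-1) * ‖x‖) := by rw [← Finset.sum_mul, ← hΓ]
        _ = Γ * (max 1 (1/ε)) ^ (k-1) * ‖x‖ := by ring
    have hΓγ : Γ ≤ γ := by rw [hγ]; linarith
    -- statement (i), first half
    have goal1 : ∀ x, p x ≤ γ * (max 1 (1/ε)) ^ (k-1) * hNorm x := by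
      intro x
      refine (hple x).trans ?_
      have : Γ * (max 1 (1/ε)) ^ (k-1) ≤ γ * (max 1 (1/ε)) ^ (k-1) :=
        mul_le_mul_of_nonneg_right hΓγ hmaxpow0
      exact mul_le_mul_of_nonneg_right this (norm_nonneg x)
    have goal2 : ∀ x, hNorm x ≤ γ * (max 1 ε) ^ (k-1) * p x := by
      intro x
      refine (hhlep x).trans ?_
      have h1 : (1:ℝ) ≤ γ * (max 1 ε) ^ (k-1) := one_le_mul_of_one_le_of_one_le hγ1 hmaxpow1'
      nlinarith [hpnn x]
    -- bound for p-opnorm sets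
    have hCq_p : ∀ B : Matrix (Fin n) (Fin n) ℂ, ∃ Cp : ℝ,
        ∀ x, p (B.mulVec x) ≤ Cp * p x := by
      intro B
      obtain ⟨Cb, hCb0, hCb⟩ := exists_bound B.mulVecLin
      refine ⟨γ * (max 1 (1/ε)) ^ (k-1) * Cb, fun x => ?_⟩
      calc p (B.mulVec x) ≤ γ * (max 1 (1/ε)) ^ (k-1) * hNorm (B.mulVec x) := goal1 _
        _ ≤ γ * (max 1 (1/ε)) ^ (k-1) * (Cb * ‖x‖) := by
            refine mul_le_mul_of_nonneg_left (hCb x) (by positivity)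
        _ ≤ γ * (max 1 (1/ε)) ^ (k-1) * (Cb * p x) := by
            refine mul_le_mul_of_nonneg_left
              (mul_le_mul_of_nonneg_left (hhlep x) hCb0) (by positivity)
        _ = γ * (max 1 (1/ε)) ^ (k-1) * Cb * p x := by ring
    -- the product identity for the max factors
    have hmaxmul : max 1 (1/ε) * max 1 ε = max ε (1/ε) := by
      rcases le_total ε 1 with h | h
      · have h1 : 1 ≤ 1/ε := by rw [one_div]; exact (one_le_inv₀ hε).mpr h
        rw [max_eq_left h, max_eq_right h1, max_eq_right (h.trans h1), mul_one]
      · have h1 : 1/ε ≤ 1 := by rw [one_div]; exact inv_le_one_of_one_le₀ h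
        rw [max_eq_right h, max_eq_left h1, max_eq_left (h1.trans h), one_mul]
    have hab : γ * (max 1 (1/ε)) ^ (k-1) * (γ * (max 1 ε) ^ (k-1))
        = γ^2 * (max ε (1/ε)) ^ (k-1) := by
      rw [← hmaxmul, mul_pow]
      ring
    -- statement (ii)
    have goal3 : ∀ B : Matrix (Fin n) (Fin n) ℂ,
        opNormWrt p B ≤ γ^2 * (max ε (1/ε)) ^ (k-1) * opNormWrt hNorm B := by
      intro B
      obtain ⟨Cb, hCb0, hCb⟩ := exists_bound B.mulVecLin
      rw [← hab]
      exact opNormWrt_le_of_dominates hpnorm isNormOn_hNorm (by positivity) (by positivity)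
        goal1 goal2 (fun x => hCb x)
    have goal4 : ∀ B : Matrix (Fin n) (Fin n) ℂ,
        opNormWrt hNorm B ≤ γ^2 * (max ε (1/ε)) ^ (k-1) * opNormWrt p B := by
      intro B
      obtain ⟨Cp, hCp⟩ := hCq_p B
      have := opNormWrt_le_of_dominates isNormOn_hNorm hpnorm (by positivity : (0:ℝ) ≤ γ * (max 1 ε) ^ (k-1)) (by positivity : (0:ℝ) ≤ γ * (max 1 (1/ε)) ^ (k-1))
        goal2 goal1 hCp
      calc opNormWrt hNorm B ≤ γ * (max 1 ε) ^ (k-1) * (γ * (max 1 (1/ε)) ^ (k-1)) * opNormWrt p B := this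
        _ = γ^2 * (max ε (1/ε)) ^ (k-1) * opNormWrt p B := by rw [← hab]; ring
    -- key nilpotent estimate
    have hNy : ∀ (μ : rootSet A) (y : Fin n → ℂ), y ∈ Wsub A μ →
        q μ.1 ((f - μ.1 • 1) y) ≤ ε' * q μ.1 y := by
      intro μ y hy
      have hk0 : ((f - μ.1 • 1) ^ k) y = 0 := Wsub_pow_eq_zero hk μ hy
      have hstep : ∀ j : ℕ, ((f - μ.1 • 1) ^ j) ((f - μ.1 • 1) y)
          = ((f - μ.1 • 1) ^ (j+1)) y := by
        intro j
        rw [pow_succ, Module.End.mul_apply]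
      set v : ℕ → ℝ := fun i => ε⁻¹ ^ i * ‖((f - μ.1 • 1) ^ i) y‖ with hv
      set u : ℕ → ℝ := fun j => ε⁻¹ ^ j * ‖((f - μ.1 • 1) ^ (j+1)) y‖ with hu
      have hv0 : ∀ i, 0 ≤ v i := fun i =>
        mul_nonneg (pow_nonneg hεinv0 i) (norm_nonneg _)
      have hqy : q μ.1 y = ∑ i ∈ Finset.range k, v i := by rw [hq]
      have hLHS : q μ.1 ((f - μ.1 • 1) y) = ∑ j ∈ Finset.range k, u j := by
        rw [hq]
        refine Finset.sum_congr rfl fun j _ => ?_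
        rw [hstep j]
      by_cases hkone : k = 1
      · have h0 : (f - μ.1 • 1) y = 0 := by
          have := hk0
          rw [hkone, pow_one] at this
          exact this
        rw [h0, hqzero, hε', if_pos hkone, zero_mul, zero_mul]
      · have hε'ε : ε' = ε := by rw [hε', if_neg hkone, one_mul]
        have hkk : k - 1 + 1 = k := Nat.succ_pred_eq_of_pos hk1
        rw [hLHS, hε'ε, hqy]
        have hlast : u (k-1) = 0 := by
          rw [hu]
          simp only
          rw [hkk, hk0, norm_zero, mul_zero]
        have hdrop : ∑ j ∈ Finset.range k, u j = ∑ j ∈ Finset.range (k-1), u j := by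
          rw [← hkk, Finset.sum_range_succ, hkk, hlast, add_zero]
        rw [hdrop]
        have hterm : ∀ j, u j = ε * v (j+1) := by
          intro j
          rw [hu, hv]
          simp only
          rw [pow_succ]
          have hεε : ε * ε⁻¹ = 1 := mul_inv_cancel₀ hε.ne'
          calc ε⁻¹ ^ j * ‖((f - μ.1 • 1) ^ (j+1)) y‖
              = (ε * ε⁻¹) * (ε⁻¹ ^ j * ‖((f - μ.1 • 1) ^ (j+1)) y‖) := by
                rw [hεε, one_mul]
            _ = ε * (ε⁻¹ ^ j * ε⁻¹ * ‖((f - μ.1 • 1) ^ (j+1)) y‖) := by ring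
        calc ∑ j ∈ Finset.range (k-1), u j
            = ε * ∑ j ∈ Finset.range (k-1), v (j+1) := by
              rw [Finset.mul_sum]
              exact Finset.sum_congr rfl fun j _ => hterm j
          _ ≤ ε * ∑ i ∈ Finset.range k, v i := by
              refine mul_le_mul_of_nonneg_left ?_ hε.le
              have := sum_shift_le hv0 (k-1)
              rw [hkk] at this
              exact this
    -- decomposition of f on each generalized eigenspace
    have hdecomp : ∀ (μ : ℂ) (y : Fin n → ℂ), f y = μ • y + (f - μ • 1) y := by
      intro μ y
      simp [LinearMap.sub_apply, LinearMap.smul_apply]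
    have hqfup : ∀ (μ : rootSet A) (y : Fin n → ℂ), y ∈ Wsub A μ →
        q μ.1 (f y) ≤ (‖μ.1‖ + ε') * q μ.1 y := by
      intro μ y hy
      calc q μ.1 (f y) = q μ.1 (μ.1 • y + (f - μ.1 • 1) y) := by rw [← hdecomp]
        _ ≤ q μ.1 (μ.1 • y) + q μ.1 ((f - μ.1 • 1) y) := hqadd _ _ _
        _ ≤ ‖μ.1‖ * q μ.1 y + ε' * q μ.1 y := by
            rw [hqsmul]
            exact add_le_add_right (hNy μ y hy) _
        _ = (‖μ.1‖ + ε') * q μ.1 y := by ring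
    have hqfdn : ∀ (μ : rootSet A) (y : Fin n → ℂ), y ∈ Wsub A μ →
        (‖μ.1‖ - ε') * q μ.1 y ≤ q μ.1 (f y) := by
      intro μ y hy
      have h1 : q μ.1 (μ.1 • y) ≤ q μ.1 (f y) + q μ.1 ((f - μ.1 • 1) y) := by
        have : μ.1 • y = f y - (f - μ.1 • 1) y := by
          rw [hdecomp μ.1 y]; abel
        rw [this]
        exact hqsub _ _ _
      rw [hqsmul] at h1
      have h2 := hNy μ y hy
      nlinarith [hqnn μ.1 y, hqnn μ.1 (f y)]
    -- spectral radius bounds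
    have hρub : ∀ μ ∈ rootSet A, ‖μ‖ ≤ specRad A := by
      intro μ hμ
      rw [specRad_eq_max' A hne]
      exact Finset.le_max' _ _ (Finset.mem_image_of_mem _ hμ)
    have hρ0 : 0 ≤ specRad A := by
      obtain ⟨μ, hμ⟩ := hne
      exact (norm_nonneg μ).trans (hρub μ hμ)
    -- p (f x) expansion
    have hpf : ∀ x, p (f x) = ∑ μ : rootSet A, q μ.1 (f (projW A μ x)) := by
      intro x
      rw [hp]
      exact Finset.sum_congr rfl fun μ _ => by rw [projW_comm]
    have goal6 : opNormWrt p A ≤ specRad A + ε' := by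
      refine opNormWrt_le hpnorm (by linarith) fun x => ?_
      have hAx : A.mulVec x = f x := rfl
      rw [hAx, hpf]
      calc ∑ μ : rootSet A, q μ.1 (f (projW A μ x))
          ≤ ∑ μ : rootSet A, (specRad A + ε') * q μ.1 (projW A μ x) := by
            refine Finset.sum_le_sum fun μ _ => ?_
            refine (hqfup μ _ (projW_mem A μ x)).trans ?_
            exact mul_le_mul_of_nonneg_right
              (add_le_add_left (hρub μ.1 μ.2) _) (hqnn _ _)
        _ = (specRad A + ε') * p x := by rw [hp, Finset.mul_sum]
    have goal5 : specRad A ≤ opNormWrt p A := by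
      obtain ⟨Cp, hCp⟩ := hCq_p A
      exact specRad_le_opNormWrt hne hpnorm hCp
    -- statement (iv)
    have goal7 : IsUnit A.det → (specRad A⁻¹)⁻¹ > ε' →
        specRad A⁻¹ ≤ opNormWrt p A⁻¹ ∧
        opNormWrt p A⁻¹ ≤ ((specRad A⁻¹)⁻¹ - ε')⁻¹ := by
      intro hdet hgt
      have hsRinv := specRad_inv_eq hdet hne
      set m0 : ℝ := ((rootSet A).image (fun z : ℂ => ‖z‖)).min' (hne.image _) with hm0
      have hm0pos : 0 < m0 := min'_pos hdet hne
      rw [hsRinv, inv_inv] at hgt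
      have hm0le : ∀ μ ∈ rootSet A, m0 ≤ ‖μ‖ := by
        intro μ hμ
        exact Finset.min'_le _ _ (Finset.mem_image_of_mem _ hμ)
      have hneInv : (rootSet A⁻¹).Nonempty := by
        obtain ⟨ν, hν⟩ := hne
        exact ⟨ν⁻¹, mem_rootSet_iff.mpr
          ((isRoot_inv_iff hdet).mpr ⟨ν, mem_rootSet_iff.mp hν, rfl⟩)⟩
      constructor
      · obtain ⟨Cp, hCp⟩ := hCq_p A⁻¹
        exact specRad_le_opNormWrt hneInv hpnorm hCp
      · have hkey : ∀ x, (m0 - ε') * p x ≤ p (A.mulVec x) := by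
          intro x
          have hAx : A.mulVec x = f x := rfl
          rw [hAx]
          calc (m0 - ε') * p x
              = ∑ μ : { x // x ∈ rootSet A }, (m0 - ε') * q μ.1 (projW A μ x) := by
                rw [hp]; exact Finset.mul_sum _ _ _
            _ ≤ ∑ μ : { x // x ∈ rootSet A }, q μ.1 (f (projW A μ x)) := by
                refine Finset.sum_le_sum fun μ _ => ?_
                refine le_trans ?_ (hqfdn μ _ (projW_mem A μ x))
                exact mul_le_mul_of_nonneg_right
                  (sub_le_sub_right (hm0le μ.1 μ.2) _) (hqnn _ _)
            _ = p (f x) := (hpf x).symm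
        have hpos : 0 < m0 - ε' := by linarith
        rw [hsRinv, inv_inv]
        refine opNormWrt_le hpnorm (inv_nonneg.mpr hpos.le) fun y => ?_
        have h1 := hkey (A⁻¹.mulVec y)
        have h2 : A.mulVec (A⁻¹.mulVec y) = y := by
          rw [Matrix.mulVec_mulVec, Matrix.mul_nonsing_inv A hdet, Matrix.one_mulVec]
        rw [h2] at h1
        exact (le_inv_mul_iff₀ hpos).mpr h1
    exact ⟨p, hpnorm, goal1, goal2, goal3, goal4, goal5, goal6, goal7⟩
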